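/- arXiv:1908.07030 — 2 statements merged into one kernel-verified Lean document; each statement's English description precedes it below -/
import Mathlib

section
/- Let G be a finite p-group and let M, N be powerfully embedded subgroups of G. Then [M^{p^i}, N^{p^j}] = [M,N]^{p^{i+j}} for all natural numbers i, j. -/
set_option maxHeartbeats 1000000
open scoped commutatorElement


/-- For a subgroup `H` of `G`, the subgroup generated by `n`-th powers of elements of `H`. -/
def sgPow {G : Type*} [Group G] (H : Subgroup G) (n : ℕ) : Subgroup G :=
  Subgroup.closure {x | ∃ h ∈ H, h ^ n = x}

/-- A subgroup `N` of a finite p-group `G` is powerfully embedded if `[N,G] ≤ N^p`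
for odd p, resp. `[N,G] ≤ N^4` for p = 2. -/
def PowerfullyEmbedded {G : Type*} [Group G] (p : ℕ) (N : Subgroup G) : Prop :=
  ⁅N, (⊤ : Subgroup G)⁆ ≤ sgPow N (if p = 2 then 4 else p)

namespace PfAux

open Subgroup

variable {G : Type*} [Group G] {G' : Type*} [Group G']

/-- powerfully embedded with explicit exponent -/
def PE (q : ℕ) (N : Subgroup G) : Prop := ⁅N, (⊤ : Subgroup G)⁆ ≤ sgPow N q

lemma sgPow_le (H : Subgroup G) (n : ℕ) : sgPow H n ≤ H := by
  apply closure_le _ |>.mpr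
  rintro x ⟨h, hh, rfl⟩
  exact H.pow_mem hh n

lemma mem_sgPow_of_mem {H : Subgroup G} {a : G} (ha : a ∈ H) (n : ℕ) : a ^ n ∈ sgPow H n :=
  subset_closure ⟨a, ha, rfl⟩

lemma sgPow_mono {H K : Subgroup G} (h : H ≤ K) (n : ℕ) : sgPow H n ≤ sgPow K n := by
  apply closure_le _ |>.mpr
  rintro x ⟨a, ha, rfl⟩
  exact mem_sgPow_of_mem (h ha) n

lemma sgPow_one (H : Subgroup G) : sgPow H 1 = H := by
  apply le_antisymm
  · apply closure_le _ |>.mpr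
    rintro x ⟨h, hh, rfl⟩
    simpa using hh
  · intro a ha
    exact pow_one a ▸ mem_sgPow_of_mem ha 1

lemma sgPow_mul_le (H : Subgroup G) (m n : ℕ) : sgPow H (m * n) ≤ sgPow H m := by
  apply closure_le _ |>.mpr
  rintro x ⟨h, hh, rfl⟩
  rw [pow_mul]
  exact (sgPow H m).pow_mem (mem_sgPow_of_mem hh m) n

lemma sgPow_mul_le' (H : Subgroup G) (m n : ℕ) : sgPow H (m * n) ≤ sgPow (sgPow H m) n := by
  apply closure_le _ |>.mpr
  rintro x ⟨h, hh, rfl⟩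
  rw [pow_mul]
  exact mem_sgPow_of_mem (mem_sgPow_of_mem hh m) n

lemma map_sgPow (f : G →* G') (H : Subgroup G) (n : ℕ) :
    (sgPow H n).map f = sgPow (H.map f) n := by
  rw [sgPow, sgPow, MonoidHom.map_closure]
  congr 1
  ext x
  constructor
  · rintro ⟨y, ⟨h, hh, rfl⟩, rfl⟩
    exact ⟨f h, mem_map_of_mem f hh, (map_pow f h n).symm⟩
  · rintro ⟨y, ⟨h, hh, rfl⟩, rfl⟩
    exact ⟨h ^ n, ⟨h, hh, rfl⟩, map_pow f h n⟩

lemma sgPow_normal (H : Subgroup G) (hH : H.Normal) (n : ℕ) : (sgPow H n).Normal := by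
  constructor
  intro a ha g
  have h2 : H.map (MulAut.conj g).toMonoidHom = H := by
    ext x
    simp only [mem_map, MulAut.conj_apply, MonoidHom.coe_coe]
    constructor
    · rintro ⟨y, hy, rfl⟩
      exact hH.conj_mem y hy g
    · intro hx
      refine ⟨g⁻¹ * x * g, by simpa using hH.conj_mem x hx g⁻¹, ?_⟩
      show g * (g⁻¹ * x * g) * g⁻¹ = x
      group
  have h1 : (sgPow H n).map (MulAut.conj g).toMonoidHom = sgPow H n := by
    rw [map_sgPow, h2]
  rw [← h1]
  exact mem_map_of_mem _ ha

lemma commutator_le_of_closure {S : Set G} {B T : Subgroup G} (hT : T.Normal)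
    (h : ∀ s ∈ S, ∀ b ∈ B, ⁅s, b⁆ ∈ T) : ⁅Subgroup.closure S, B⁆ ≤ T := by
  rw [Subgroup.commutator_le]
  intro a ha
  induction ha using closure_induction with
  | mem x hx => exact h x hx
  | one =>
    intro b hb
    have : ⁅(1 : G), b⁆ = 1 := by group
    rw [this]; exact one_mem T
  | mul x y hx hy ihx ihy =>
    intro b hb
    have key : ⁅x * y, b⁆ = x * ⁅y, b⁆ * x⁻¹ * ⁅x, b⁆ := by group
    rw [key]
    exact mul_mem (hT.conj_mem _ (ihy b hb) x) (ihx b hb)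
  | inv x hx ihx =>
    intro b hb
    have key : ⁅x⁻¹, b⁆ = x⁻¹ * ⁅x, b⁆⁻¹ * x⁻¹⁻¹ := by group
    rw [key]
    exact hT.conj_mem _ (inv_mem (ihx b hb)) x⁻¹

end PfAux

namespace PfAux

open Subgroup

variable {G : Type*} [Group G] {G' : Type*} [Group G']

lemma comm_mul_right (a u v : G) : ⁅a, u * v⁆ = ⁅a, u⁆ * (u * ⁅a, v⁆ * u⁻¹) := by group

/-- Key expansion: if all commutators of `⁅x,g⁆⁻¹` are central, then
`⁅x^n, g⁆ = ⁅x,g⁆^n * ⁅⁅x,g⁆⁻¹, x⁆^(n choose 2)`. -/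
lemma comm_pow (x g : G) (hc : ∀ z y : G, Commute ⁅⁅x, g⁆⁻¹, z⁆ y) (n : ℕ) :
    ⁅x ^ n, g⁆ = ⁅x, g⁆ ^ n * ⁅⁅x, g⁆⁻¹, x⁆ ^ n.choose 2 := by
  set c := ⁅x, g⁆ with hc_def
  set w := ⁅c⁻¹, x⁆ with hw_def
  have hw : ∀ k : ℕ, ⁅c⁻¹, x ^ k⁆ = w ^ k := by
    intro k
    induction k with
    | zero => simp
    | succ k ih =>
      have h1 : x ^ (k + 1) = x * x ^ k := by rw [pow_succ']
      rw [h1, comm_mul_right, ih]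
      have h2 : x * w ^ k * x⁻¹ = w ^ k := by
        have := ((hc (x ^ k) x).symm)
        rw [← ih] at *
        have h3 : Commute x ⁅c⁻¹, x ^ k⁆ := (hc (x ^ k) x).symm
        rw [ih] at h3
        rw [h3.eq]; group
      rw [h2, pow_succ']
  induction n with
  | zero => simp
  | succ n ih =>
    have key : ⁅x ^ (n + 1), g⁆ = x ^ n * ⁅x, g⁆ * (x ^ n)⁻¹ * ⁅x ^ n, g⁆ := by
      rw [pow_succ]; group
    have key2 : x ^ n * c * (x ^ n)⁻¹ = c * ⁅c⁻¹, x ^ n⁆ := by group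
    rw [key, ← hc_def, key2, hw, ih]
    have hcomm_wc : Commute w c := hc x c
    have h4 : w ^ n * c ^ n = c ^ n * w ^ n := (hcomm_wc.pow_pow n n).eq
    calc c * w ^ n * (c ^ n * w ^ n.choose 2)
        = c * (w ^ n * c ^ n) * w ^ n.choose 2 := by group
      _ = c * (c ^ n * w ^ n) * w ^ n.choose 2 := by rw [h4]
      _ = c ^ (n + 1) * w ^ (n + n.choose 2) := by rw [pow_add, pow_succ']; group
      _ = c ^ (n + 1) * w ^ ((n + 1).choose 2) := by
          congr 1
          rw [Nat.choose_succ_succ, Nat.choose_one_right, add_comm]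

/-- If `e := ⁅b,a⁆` is central then `(a*b)^n = a^n * b^n * e^(n choose 2)`. -/
lemma mul_pow_comm2 (a b : G) (hc : ∀ y : G, Commute ⁅b, a⁆ y) (n : ℕ) :
    (a * b) ^ n = a ^ n * b ^ n * ⁅b, a⁆ ^ n.choose 2 := by
  set e := ⁅b, a⁆ with he_def
  have hba : b * a = a * b * e := by
    have h1 : b * a = e * (a * b) := by simp only [he_def]; group
    rw [h1, (hc (a * b)).eq]
  have hpow : ∀ m : ℕ, b ^ m * a = a * b ^ m * e ^ m := by
    intro m
    induction m with
    | zero => simp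
    | succ m ih =>
      calc b ^ (m + 1) * a = b * (b ^ m * a) := by rw [pow_succ']; group
        _ = b * (a * b ^ m * e ^ m) := by rw [ih]
        _ = (b * a) * b ^ m * e ^ m := by group
        _ = (a * b * e) * b ^ m * e ^ m := by rw [hba]
        _ = a * b * (e * b ^ m) * e ^ m := by group
        _ = a * b * (b ^ m * e) * e ^ m := by rw [(hc (b ^ m)).eq]
        _ = a * b ^ (m + 1) * e ^ (m + 1) := by rw [pow_succ', pow_succ]; group
  induction n with
  | zero => simp
  | succ n ih =>
    calc (a * b) ^ (n + 1) = (a * b) ^ n * (a * b) := by rw [pow_succ]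
      _ = a ^ n * b ^ n * e ^ n.choose 2 * (a * b) := by rw [ih]
      _ = a ^ n * (b ^ n * (e ^ n.choose 2 * a)) * b := by group
      _ = a ^ n * (b ^ n * (a * e ^ n.choose 2)) * b := by rw [(hc a).pow_left (n.choose 2) |>.eq]
      _ = a ^ n * (b ^ n * a) * (e ^ n.choose 2 * b) := by group
      _ = a ^ n * (a * b ^ n * e ^ n) * (b * e ^ n.choose 2) := by
          rw [hpow n, ((hc b).pow_left (n.choose 2)).eq]
      _ = a ^ (n + 1) * b ^ n * (e ^ n * b) * e ^ n.choose 2 := by rw [pow_succ']; group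
      _ = a ^ (n + 1) * b ^ n * (b * e ^ n) * e ^ n.choose 2 := by
          rw [((hc b).pow_left n).eq]
      _ = a ^ (n + 1) * b ^ (n + 1) * e ^ (n + n.choose 2) := by rw [pow_succ', pow_add]; group
      _ = a ^ (n + 1) * b ^ (n + 1) * e ^ ((n + 1).choose 2) := by
          congr 1
          rw [Nat.choose_succ_succ, Nat.choose_one_right, add_comm]

end PfAux

namespace PfAux

open Subgroup

variable {G : Type*} [Group G] {G' : Type*} [Group G']

lemma sup_commutator_top_le (A B : Subgroup G) (hA : A.Normal) (hB : B.Normal) :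
    ⁅A ⊔ B, (⊤ : Subgroup G)⁆ ≤ ⁅A, (⊤ : Subgroup G)⁆ ⊔ ⁅B, (⊤ : Subgroup G)⁆ := by
  haveI := hA; haveI := hB
  have hT : (⁅A, (⊤ : Subgroup G)⁆ ⊔ ⁅B, (⊤ : Subgroup G)⁆).Normal := inferInstance
  have hAB : A ⊔ B = Subgroup.closure ((A : Set G) ∪ (B : Set G)) := by
    rw [Subgroup.closure_union, Subgroup.closure_eq, Subgroup.closure_eq]
  rw [hAB]
  apply commutator_le_of_closure hT
  rintro s (hs | hs) b hb
  · exact le_sup_left (α := Subgroup G) (commutator_mem_commutator hs hb : _ ∈ ⁅A, ⊤⁆)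
  · exact le_sup_right (α := Subgroup G) (commutator_mem_commutator hs hb : _ ∈ ⁅B, ⊤⁆)

lemma le_of_le_sup_commutator (hnil : Group.IsNilpotent G) {H K : Subgroup G}
    (hH : H.Normal) (hK : K.Normal) (h : H ≤ K ⊔ ⁅H, (⊤ : Subgroup G)⁆) : H ≤ K := by
  haveI := hH; haveI := hK
  let D : ℕ → Subgroup G := fun n => Nat.rec ⁅H, (⊤ : Subgroup G)⁆ (fun _ Dn => ⁅Dn, (⊤ : Subgroup G)⁆) n
  have hD0 : D 0 = ⁅H, (⊤ : Subgroup G)⁆ := rfl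
  have hDs : ∀ n, D (n + 1) = ⁅D n, (⊤ : Subgroup G)⁆ := fun n => rfl
  have hDnormal : ∀ n, (D n).Normal := by
    intro n
    induction n with
    | zero => rw [hD0]; infer_instance
    | succ n ih =>
      haveI := ih
      rw [hDs n]
      exact @Subgroup.commutator_normal _ _ (D n) ⊤ ih inferInstance
  have claim1 : ∀ n, H ≤ K ⊔ D n := by
    intro n
    induction n with
    | zero => rw [hD0]; exact h
    | succ n ih =>
      have h2 : ⁅H, (⊤ : Subgroup G)⁆ ≤ ⁅K ⊔ D n, (⊤ : Subgroup G)⁆ :=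
        commutator_mono ih le_rfl
      have h3 : ⁅K ⊔ D n, (⊤ : Subgroup G)⁆ ≤ ⁅K, (⊤ : Subgroup G)⁆ ⊔ ⁅D n, (⊤ : Subgroup G)⁆ :=
        sup_commutator_top_le K (D n) hK (hDnormal n)
      have h4 : ⁅K, (⊤ : Subgroup G)⁆ ≤ K := @Subgroup.commutator_le_left _ _ K ⊤ hK
      have h5 : ⁅H, (⊤ : Subgroup G)⁆ ≤ K ⊔ D (n + 1) := by
        rw [hDs n]
        exact (h2.trans h3).trans (sup_le_sup h4 le_rfl)
      exact h.trans (sup_le le_sup_left h5)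
  have claim2 : ∀ n, D n ≤ Subgroup.lowerCentralSeries (⊤ : Subgroup G) (n + 1) := by
    intro n
    induction n with
    | zero =>
      rw [hD0]
      have : Subgroup.lowerCentralSeries (⊤ : Subgroup G) 1 = ⁅(⊤ : Subgroup G), (⊤ : Subgroup G)⁆ := rfl
      rw [this]
      exact commutator_mono le_top le_rfl
    | succ n ih =>
      rw [hDs]
      have : Subgroup.lowerCentralSeries (⊤ : Subgroup G) (n + 2) = ⁅Subgroup.lowerCentralSeries (⊤ : Subgroup G) (n + 1), (⊤ : Subgroup G)⁆ := rfl
      rw [this]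
      exact commutator_mono ih le_rfl
  obtain ⟨n, hn⟩ := Subgroup.nilpotent_iff_lowerCentralSeries.mp hnil
  have hlcs : Subgroup.lowerCentralSeries (⊤ : Subgroup G) (n + 1) = ⊥ := by
    have : Subgroup.lowerCentralSeries (⊤ : Subgroup G) (n + 1) = ⁅Subgroup.lowerCentralSeries (⊤ : Subgroup G) n, (⊤ : Subgroup G)⁆ := rfl
    rw [this, hn, commutator_bot_left]
  have := (claim2 n).trans_eq hlcs
  exact (claim1 n).trans (by rw [le_bot_iff.mp this]; simp)

lemma subsingleton_of_sgPow_top {W : Type*} [Group W] [Finite W] {p : ℕ} (hp : p.Prime)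
    (hpW : IsPGroup p W) (h : sgPow (⊤ : Subgroup W) p = ⊤) : Subsingleton W := by
  haveI : Fact p.Prime := ⟨hp⟩
  have hA : IsPGroup p (Abelianization W) := hpW.to_quotient (commutator W)
  have hsur : Function.Surjective (fun a : Abelianization W => a ^ p) := by
    intro a
    obtain ⟨x, rfl⟩ := QuotientGroup.mk_surjective a
    have hx : x ∈ sgPow (⊤ : Subgroup W) p := h.symm ▸ mem_top x
    have claim : ∀ y ∈ sgPow (⊤ : Subgroup W) p,
        ∃ b : Abelianization W, b ^ p = Abelianization.of y := by
      intro y hy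
      induction hy using closure_induction with
      | mem z hz =>
        obtain ⟨u, -, rfl⟩ := hz
        exact ⟨Abelianization.of u, by rw [← map_pow]⟩
      | one => exact ⟨1, by simp⟩
      | mul u v hu hv ihu ihv =>
        obtain ⟨bu, hbu⟩ := ihu
        obtain ⟨bv, hbv⟩ := ihv
        exact ⟨bu * bv, by rw [mul_pow, hbu, hbv, map_mul]⟩
      | inv u hu ihu =>
        obtain ⟨bu, hbu⟩ := ihu
        exact ⟨bu⁻¹, by rw [inv_pow, hbu, map_inv]⟩
    obtain ⟨b, hb⟩ := claim x hx
    exact ⟨b, hb⟩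
  have hinj : Function.Injective (fun a : Abelianization W => a ^ p) :=
    (Finite.injective_iff_surjective).mpr hsur
  have hA_triv : Subsingleton (Abelianization W) := by
    by_contra hcon
    rw [not_subsingleton_iff_nontrivial] at hcon
    have hdvd : p ∣ Nat.card (Abelianization W) := by
      obtain ⟨n, hn⟩ := IsPGroup.iff_card.mp hA
      rcases n with - | n
      · simp at hn
        haveI := hcon
        have := Finite.one_lt_card (α := Abelianization W)
        omega
      · exact hn ▸ dvd_pow_self p (Nat.succ_ne_zero n)
    obtain ⟨a, ha⟩ := exists_prime_orderOf_dvd_card' p hdvd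
    have h1 : a ^ p = 1 := by rw [← ha]; exact pow_orderOf_eq_one a
    have h2 : a = 1 := hinj (by simpa using h1)
    rw [h2, orderOf_one] at ha
    exact hp.one_lt.ne ha
  have hcomm_top : commutator W = ⊤ := by
    rw [eq_top_iff]
    intro x _
    haveI : Subsingleton (W ⧸ commutator W) := hA_triv
    have : (QuotientGroup.mk x : W ⧸ commutator W) = 1 := Subsingleton.elim _ _
    exact (QuotientGroup.eq_one_iff x).mp this
  have hnil : Group.IsNilpotent W := hpW.isNilpotent
  have htop : (⊤ : Subgroup W) ≤ ⊥ := by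
    apply le_of_le_sup_commutator hnil (inferInstance) (inferInstance)
    rw [show ⁅(⊤ : Subgroup W), (⊤ : Subgroup W)⁆ = commutator W from rfl, hcomm_top]
    simp
  constructor
  intro a b
  have ha : a ∈ (⊥ : Subgroup W) := htop (mem_top a)
  have hb : b ∈ (⊥ : Subgroup W) := htop (mem_top b)
  rw [mem_bot] at ha hb
  rw [ha, hb]

/-- The descent workhorse: in a finite p-group, if `H ≤ K ⊔ H^p ⊔ [H,G]` then `H ≤ K`. -/
lemma descent [Finite G] {p : ℕ} (hp : p.Prime) (hpG : IsPGroup p G) {H K : Subgroup G}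
    (hHn : H.Normal) (hKn : K.Normal)
    (h : H ≤ K ⊔ sgPow H p ⊔ ⁅H, (⊤ : Subgroup G)⁆) : H ≤ K := by
  haveI := hHn; haveI := hKn
  haveI : Fact p.Prime := ⟨hp⟩
  let π := QuotientGroup.mk' K
  haveI : Finite (G ⧸ K) := Quotient.finite _
  have hpQ : IsPGroup p (G ⧸ K) := hpG.to_quotient K
  set Hb := H.map π with hHb
  have hHbn : Hb.Normal := hHn.map π (QuotientGroup.mk'_surjective K)
  have hKbot : K.map π = ⊥ := (Subgroup.map_eq_bot_iff K).mpr (by rw [QuotientGroup.ker_mk'])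
  have h2 : Hb ≤ sgPow Hb p ⊔ ⁅Hb, (⊤ : Subgroup (G ⧸ K))⁆ := by
    calc Hb ≤ (K ⊔ sgPow H p ⊔ ⁅H, (⊤ : Subgroup G)⁆).map π := map_mono h
      _ = K.map π ⊔ (sgPow H p).map π ⊔ ⁅H, (⊤ : Subgroup G)⁆.map π := by
          rw [Subgroup.map_sup (K ⊔ sgPow H p) ⁅H, (⊤ : Subgroup G)⁆ π,
            Subgroup.map_sup K (sgPow H p) π]
      _ = ⊥ ⊔ sgPow Hb p ⊔ ⁅Hb, (⊤ : Subgroup (G ⧸ K))⁆ := by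
          rw [hKbot, map_sgPow, map_commutator,
            map_top_of_surjective π (QuotientGroup.mk'_surjective K)]
      _ = sgPow Hb p ⊔ ⁅Hb, (⊤ : Subgroup (G ⧸ K))⁆ := by rw [bot_sup_eq]
  have h3 : Hb ≤ sgPow Hb p :=
    le_of_le_sup_commutator hpQ.isNilpotent hHbn (sgPow_normal Hb hHbn p) h2
  have h4 : Hb = sgPow Hb p := le_antisymm h3 (sgPow_le Hb p)
  have h5 : sgPow (⊤ : Subgroup Hb) p = ⊤ := by
    apply map_injective Hb.subtype_injective
    rw [map_sgPow, ← MonoidHom.range_eq_map, range_subtype]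
    exact h4.symm
  have h6 : Subsingleton Hb := subsingleton_of_sgPow_top hp (hpQ.to_subgroup Hb) h5
  have h7 : Hb = ⊥ := by
    rw [eq_bot_iff]
    intro x hx
    have : (⟨x, hx⟩ : Hb) = ⟨1, one_mem Hb⟩ := Subsingleton.elim _ _
    simpa [Subtype.ext_iff] using this
  have h8 : H ≤ π.ker := (Subgroup.map_eq_bot_iff H).mp h7
  rwa [QuotientGroup.ker_mk'] at h8

end PfAux

namespace PfAux

open Subgroup

variable {G : Type*} [Group G] {G' : Type*} [Group G']

lemma PE.normal {q : ℕ} {N : Subgroup G} (h : PE q N) : N.Normal := by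
  constructor
  intro n hn g
  have h1 : ⁅g, n⁆ ∈ ⁅N, (⊤ : Subgroup G)⁆ := by
    rw [Subgroup.commutator_comm]
    exact commutator_mem_commutator (mem_top g) hn
  have h2 : ⁅g, n⁆ ∈ N := (h.trans (sgPow_le N q)) h1
  have h3 : g * n * g⁻¹ = ⁅g, n⁆ * n := by group
  rw [h3]
  exact mul_mem h2 hn

lemma PE.map {q : ℕ} {N : Subgroup G} (h : PE q N) (f : G →* G') (hf : Function.Surjective f) :
    PE q (N.map f) := by
  unfold PE
  rw [← map_top_of_surjective f hf, ← map_commutator, ← map_sgPow]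
  exact map_mono h

/-- image of a subgroup contained in `T` is trivial in `G ⧸ T` -/
lemma mapq_eq_bot {X T : Subgroup G} [T.Normal] (h : X ≤ T) :
    X.map (QuotientGroup.mk' T) = ⊥ :=
  (Subgroup.map_eq_bot_iff X).mpr (by rwa [QuotientGroup.ker_mk'])

lemma mapq_commute {X T : Subgroup G} [T.Normal] (h : ⁅X, (⊤ : Subgroup G)⁆ ≤ T) :
    ∀ a ∈ X.map (QuotientGroup.mk' T), ∀ y, Commute a y := by
  intro a ha y
  obtain ⟨y', rfl⟩ := QuotientGroup.mk'_surjective T y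
  rw [← commutatorElement_eq_one_iff_commute]
  have h1 : ⁅a, (QuotientGroup.mk' T) y'⁆ ∈ ⁅X, (⊤ : Subgroup G)⁆.map (QuotientGroup.mk' T) := by
    rw [map_commutator]
    exact commutator_mem_commutator ha (mem_map_of_mem _ (mem_top y'))
  rw [mapq_eq_bot h] at h1
  simpa using h1

lemma mapq_pow_eq_one {X T : Subgroup G} [T.Normal] {p : ℕ} (h : sgPow X p ≤ T) :
    ∀ a ∈ X.map (QuotientGroup.mk' T), a ^ p = 1 := by
  intro a ha
  have h1 : a ^ p ∈ (sgPow X p).map (QuotientGroup.mk' T) := by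
    rw [map_sgPow]
    exact mem_sgPow_of_mem ha p
  rw [mapq_eq_bot h] at h1
  simpa using h1

lemma le_of_mapq_eq_bot {X T : Subgroup G} [T.Normal]
    (h : X.map (QuotientGroup.mk' T) = ⊥) : X ≤ T := by
  have := (Subgroup.map_eq_bot_iff X).mp h
  rwa [QuotientGroup.ker_mk'] at this

/-- all elements of `sgPow X p` are trivial if all elements of `X` have trivial `p`-th power -/
lemma sgPow_eq_bot_of_pow {X : Subgroup G} {p : ℕ} (h : ∀ a ∈ X, a ^ p = 1) :
    sgPow X p = ⊥ := by
  rw [eq_bot_iff]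
  apply closure_le _ |>.mpr
  rintro x ⟨a, ha, rfl⟩
  simp [h a ha]

lemma dvd_choose_two {p q : ℕ} (hq : (q = p ∧ Odd p) ∨ (p = 2 ∧ q = 4)) :
    ∃ m, q.choose 2 = p * m := by
  rcases hq with ⟨rfl, hodd⟩ | ⟨rfl, rfl⟩
  · obtain ⟨k, hk⟩ := hodd
    refine ⟨k, ?_⟩
    rw [Nat.choose_two_right]
    subst hk
    have h2 : 2 * k + 1 - 1 = 2 * k := by omega
    rw [h2, Nat.mul_div_assoc _ ⟨k, rfl⟩]
    have h3 : 2 * k / 2 = k := by omega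
    rw [h3]
  · exact ⟨3, by decide⟩

end PfAux

namespace PfAux

open Subgroup

variable {G : Type*} [Group G]

lemma core_J {Q : Type*} [Group Q] {p q : ℕ} (hq : (q = p ∧ Odd p) ∨ (p = 2 ∧ q = 4))
    (M N : Subgroup Q) (hM : PE q M) (hN : PE q N)
    (hK : sgPow ⁅M, N⁆ q = ⊥)
    (hcomm : ∀ h ∈ ⁅⁅M, N⁆, (⊤ : Subgroup Q)⁆, ∀ y, Commute h y)
    (hpow : ∀ h ∈ ⁅⁅M, N⁆, (⊤ : Subgroup Q)⁆, h ^ p = 1) :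
    ⁅sgPow M q, N⁆ = ⊥ ∧ ⁅sgPow N q, M⁆ = ⊥ ∧ ⁅⁅M, N⁆, (⊤ : Subgroup Q)⁆ = ⊥ := by
  have step : ∀ (A B : Subgroup Q), ⁅A, B⁆ = ⁅M, N⁆ → ⁅sgPow A q, B⁆ ≤ ⊥ := by
    intro A B hAB
    apply commutator_le_of_closure (inferInstance : (⊥ : Subgroup Q).Normal)
    rintro s ⟨x, hx, rfl⟩ b hb
    have hcMN : ⁅x, b⁆ ∈ ⁅M, N⁆ := hAB ▸ commutator_mem_commutator hx hb
    have hinv : ⁅x, b⁆⁻¹ ∈ ⁅M, N⁆ := inv_mem hcMN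
    have h1 : ∀ z y : Q, Commute ⁅⁅x, b⁆⁻¹, z⁆ y := fun z y =>
      hcomm _ (commutator_mem_commutator hinv (mem_top z)) y
    have key := comm_pow x b h1 q
    have hcq : ⁅x, b⁆ ^ q = 1 := by
      have := mem_sgPow_of_mem hcMN q
      rw [hK] at this
      simpa using this
    obtain ⟨m, hm⟩ := dvd_choose_two hq
    have hw : ⁅⁅x, b⁆⁻¹, x⁆ ^ q.choose 2 = 1 := by
      rw [hm, pow_mul, hpow _ (commutator_mem_commutator hinv (mem_top x)), one_pow]
    rw [mem_bot, key, hcq, hw, one_mul]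
  have s1 : ⁅sgPow M q, N⁆ = ⊥ := le_bot_iff.mp (step M N rfl)
  have s2 : ⁅sgPow N q, M⁆ = ⊥ := le_bot_iff.mp (step N M (Subgroup.commutator_comm N M))
  have s3 : ⁅⁅M, N⁆, (⊤ : Subgroup Q)⁆ = ⊥ := by
    apply Subgroup.commutator_commutator_eq_bot_of_rotate
    · apply le_bot_iff.mp
      exact (commutator_mono hN le_rfl).trans (le_bot_iff.mpr s2)
    · apply le_bot_iff.mp
      refine (commutator_mono ((Subgroup.commutator_comm (⊤ : Subgroup Q) M).le.trans hM)
        le_rfl).trans (le_bot_iff.mpr s1)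
  exact ⟨s1, s2, s3⟩

lemma lemma_J [Finite G] {p : ℕ} (hp : p.Prime) (hpG : IsPGroup p G) {q : ℕ}
    (hq : (q = p ∧ Odd p) ∨ (p = 2 ∧ q = 4)) {M N : Subgroup G} (hM : PE q M) (hN : PE q N) :
    ⁅sgPow M q, N⁆ ⊔ ⁅sgPow N q, M⁆ ⊔ ⁅⁅M, N⁆, (⊤ : Subgroup G)⁆ ≤ sgPow ⁅M, N⁆ q := by
  haveI hMn : M.Normal := hM.normal
  haveI hNn : N.Normal := hN.normal
  haveI : (sgPow M q).Normal := sgPow_normal M hMn q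
  haveI : (sgPow N q).Normal := sgPow_normal N hNn q
  set H : Subgroup G := ⁅sgPow M q, N⁆ ⊔ ⁅sgPow N q, M⁆ ⊔ ⁅⁅M, N⁆, (⊤ : Subgroup G)⁆ with hH
  set K : Subgroup G := sgPow ⁅M, N⁆ q with hKdef
  haveI hHn : H.Normal := by rw [hH]; infer_instance
  haveI hKn : K.Normal := sgPow_normal _ inferInstance q
  apply descent hp hpG hHn hKn
  haveI : (sgPow H p).Normal := sgPow_normal H hHn p
  set T : Subgroup G := K ⊔ sgPow H p ⊔ ⁅H, (⊤ : Subgroup G)⁆ with hT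
  haveI hTn : T.Normal := by rw [hT]; infer_instance
  apply le_of_mapq_eq_bot (T := T)
  set π := QuotientGroup.mk' T with hπ
  have hKT : K ≤ T := le_sup_left.trans le_sup_left
  have hXH : ⁅⁅M, N⁆, (⊤ : Subgroup G)⁆ ≤ H := le_sup_right
  have hmap : H.map π = ⁅sgPow (M.map π) q, N.map π⁆ ⊔ ⁅sgPow (N.map π) q, M.map π⁆ ⊔
      ⁅⁅M.map π, N.map π⁆, (⊤ : Subgroup (G ⧸ T))⁆ := by
    rw [hH, Subgroup.map_sup, Subgroup.map_sup, map_commutator, map_commutator, map_commutator,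
      map_commutator, map_sgPow, map_sgPow, map_top_of_surjective _ (QuotientGroup.mk'_surjective T)]
  have hcommQ : ∀ h ∈ ⁅⁅M.map π, N.map π⁆, (⊤ : Subgroup (G ⧸ T))⁆, ∀ y, Commute h y := by
    have hle : ⁅⁅⁅M, N⁆, (⊤ : Subgroup G)⁆, (⊤ : Subgroup G)⁆ ≤ T :=
      (commutator_mono hXH le_rfl).trans le_sup_right
    intro h hh y
    apply mapq_commute hle h _ y
    rw [map_commutator, map_commutator, map_top_of_surjective _ (QuotientGroup.mk'_surjective T)]
    exact hh
  have hpowQ : ∀ h ∈ ⁅⁅M.map π, N.map π⁆, (⊤ : Subgroup (G ⧸ T))⁆, h ^ p = 1 := by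
    have hle : sgPow ⁅⁅M, N⁆, (⊤ : Subgroup G)⁆ p ≤ T :=
      (sgPow_mono hXH p).trans ((le_sup_right : sgPow H p ≤ K ⊔ sgPow H p).trans le_sup_left)
    intro h hh
    apply mapq_pow_eq_one hle h
    rw [map_commutator, map_commutator, map_top_of_surjective _ (QuotientGroup.mk'_surjective T)]
    exact hh
  have hKQ : sgPow ⁅M.map π, N.map π⁆ q = ⊥ := by
    rw [← map_commutator, ← map_sgPow]
    exact mapq_eq_bot hKT
  obtain ⟨s1, s2, s3⟩ := core_J hq (M.map π) (N.map π)
    (hM.map π (QuotientGroup.mk'_surjective T)) (hN.map π (QuotientGroup.mk'_surjective T))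
    hKQ hcommQ hpowQ
  rw [hmap, s1, s2, s3]
  simp

lemma PE.commutator_pe [Finite G] {p : ℕ} (hp : p.Prime) (hpG : IsPGroup p G) {q : ℕ}
    (hq : (q = p ∧ Odd p) ∨ (p = 2 ∧ q = 4)) {M N : Subgroup G} (hM : PE q M) (hN : PE q N) :
    PE q ⁅M, N⁆ :=
  le_sup_right.trans (lemma_J hp hpG hq hM hN)

end PfAux

namespace PfAux

open Subgroup

variable {G : Type*} [Group G]

lemma core_P2_odd {Q : Type*} [Group Q] {p : ℕ} (hodd : Odd p) (N : Subgroup Q)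
    (hN : PE p N)
    (hK : sgPow (sgPow N p) p = ⊥)
    (hcomm : ∀ h ∈ ⁅sgPow N p, (⊤ : Subgroup Q)⁆, ∀ y, Commute h y)
    (hpow : ∀ h ∈ ⁅sgPow N p, (⊤ : Subgroup Q)⁆, h ^ p = 1) :
    ⁅sgPow N p, (⊤ : Subgroup Q)⁆ = ⊥ := by
  apply le_bot_iff.mp
  apply commutator_le_of_closure (inferInstance : (⊥ : Subgroup Q).Normal)
  rintro s ⟨x, hx, rfl⟩ b hb
  have hc : ⁅x, b⁆ ∈ sgPow N p := hN (commutator_mem_commutator hx (mem_top b))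
  have h1 : ∀ z y : Q, Commute ⁅⁅x, b⁆⁻¹, z⁆ y := fun z y =>
    hcomm _ (commutator_mem_commutator (inv_mem hc) (mem_top z)) y
  have key := comm_pow x b h1 p
  have hcq : ⁅x, b⁆ ^ p = 1 := by
    have := mem_sgPow_of_mem hc p
    rw [hK] at this
    simpa using this
  obtain ⟨m, hm⟩ := dvd_choose_two (Or.inl (⟨rfl, hodd⟩ : p = p ∧ Odd p))
  have hw : ⁅⁅x, b⁆⁻¹, x⁆ ^ p.choose 2 = 1 := by
    rw [hm, pow_mul, hpow _ (commutator_mem_commutator (inv_mem hc) (mem_top x)), one_pow]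
  rw [mem_bot, key, hcq, hw, one_mul]

lemma core_P2_two {Q : Type*} [Group Q] (N : Subgroup Q)
    (hN : PE 4 N)
    (hK : sgPow (sgPow N 2) 4 = ⊥)
    (hcomm : ∀ h ∈ ⁅sgPow N 2, (⊤ : Subgroup Q)⁆, ∀ y, Commute h y)
    (hpow : ∀ h ∈ ⁅sgPow N 2, (⊤ : Subgroup Q)⁆, h ^ 2 = 1) :
    ⁅sgPow N 2, (⊤ : Subgroup Q)⁆ = ⊥ := by
  set H := ⁅sgPow N 2, (⊤ : Subgroup Q)⁆ with hH
  have sub1 : ∀ c ∈ sgPow N 4, ∃ u ∈ sgPow N 2, ∃ h ∈ H, c = u ^ 2 * h := by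
    intro c hc
    induction hc using closure_induction with
    | mem z hz =>
      obtain ⟨y, hy, rfl⟩ := hz
      exact ⟨y ^ 2, mem_sgPow_of_mem hy 2, 1, one_mem H, by rw [mul_one, ← pow_mul]⟩
    | one => exact ⟨1, one_mem _, 1, one_mem _, by simp⟩
    | mul c d hcm hdm ihc ihd =>
      obtain ⟨u, hu, h, hh, rfl⟩ := ihc
      obtain ⟨v, hv, k, hk, rfl⟩ := ihd
      have he : ⁅v⁻¹, u⁻¹⁆ ∈ H := commutator_mem_commutator (inv_mem hv) (mem_top u⁻¹)
      refine ⟨u * v, mul_mem hu hv, ⁅v⁻¹, u⁻¹⁆⁻¹ * h * k,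
        mul_mem (mul_mem (inv_mem he) hh) hk, ?_⟩
      have hvu : v * u = u * v * ⁅v⁻¹, u⁻¹⁆ := by group
      have sq : (u * v) ^ 2 = u ^ 2 * v ^ 2 * ⁅v⁻¹, u⁻¹⁆ := by
        calc (u * v) ^ 2 = u * (v * u) * v := by rw [pow_two]; group
          _ = u * (u * v * ⁅v⁻¹, u⁻¹⁆) * v := by rw [hvu]
          _ = u ^ 2 * v * (⁅v⁻¹, u⁻¹⁆ * v) := by rw [pow_two]; group
          _ = u ^ 2 * v * (v * ⁅v⁻¹, u⁻¹⁆) := by rw [(hcomm _ he v).eq]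
          _ = u ^ 2 * v ^ 2 * ⁅v⁻¹, u⁻¹⁆ := by rw [pow_two, pow_two]; group
      calc u ^ 2 * h * (v ^ 2 * k) = u ^ 2 * (h * v ^ 2) * k := by group
        _ = u ^ 2 * (v ^ 2 * h) * k := by rw [(hcomm h hh (v ^ 2)).eq]
        _ = (u ^ 2 * v ^ 2 * ⁅v⁻¹, u⁻¹⁆) * (⁅v⁻¹, u⁻¹⁆⁻¹ * h * k) := by group
        _ = (u * v) ^ 2 * (⁅v⁻¹, u⁻¹⁆⁻¹ * h * k) := by rw [sq]
    | inv c hcm ihc =>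
      obtain ⟨u, hu, h, hh, rfl⟩ := ihc
      refine ⟨u⁻¹, inv_mem hu, h⁻¹, inv_mem hh, ?_⟩
      have h1 : (u ^ 2 * h)⁻¹ = h⁻¹ * (u⁻¹) ^ 2 := by group
      rw [h1, ((hcomm h hh ((u⁻¹) ^ 2)).inv_left).eq]
  apply le_bot_iff.mp
  apply commutator_le_of_closure (inferInstance : (⊥ : Subgroup Q).Normal)
  rintro s ⟨x, hx, rfl⟩ b hb
  have hc4 : ⁅x, b⁆ ∈ sgPow N 4 := hN (commutator_mem_commutator hx (mem_top b))
  have hc2 : ⁅x, b⁆ ∈ sgPow N 2 := by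
    have h42 : sgPow N 4 ≤ sgPow N 2 := by
      have : (4 : ℕ) = 2 * 2 := by norm_num
      rw [this]
      exact sgPow_mul_le N 2 2
    exact h42 hc4
  have h1 : ∀ z y : Q, Commute ⁅⁅x, b⁆⁻¹, z⁆ y := fun z y =>
    hcomm _ (commutator_mem_commutator (inv_mem hc2) (mem_top z)) y
  have key := comm_pow x b h1 2
  obtain ⟨u, hu, h, hh, hc_eq⟩ := sub1 _ hc4
  -- c^2 = 1
  have hu4 : u ^ 4 = 1 := by
    have := mem_sgPow_of_mem hu 4
    rw [hK] at this
    simpa using this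
  have hcsq : ⁅x, b⁆ ^ 2 = 1 := by
    rw [hc_eq]
    calc (u ^ 2 * h) ^ 2 = u ^ 2 * (h * u ^ 2) * h := by rw [pow_two]; group
      _ = u ^ 2 * (u ^ 2 * h) * h := by rw [(hcomm h hh (u ^ 2)).eq]
      _ = u ^ 4 * h ^ 2 := by
          rw [pow_two h]
          have h4 : u ^ 4 = u ^ 2 * u ^ 2 := by rw [← pow_add]
          rw [h4]
          group
      _ = 1 := by rw [hu4, hpow h hh, one_mul]
  -- w = 1
  have hw1 : ⁅⁅x, b⁆⁻¹, x⁆ = 1 := by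
    have hcinv : ⁅x, b⁆⁻¹ = u⁻¹ * u⁻¹ * h⁻¹ := by
      rw [hc_eq]
      have h1' : (u ^ 2 * h)⁻¹ = h⁻¹ * (u⁻¹ * u⁻¹) := by rw [pow_two]; group
      rw [h1', ((hcomm h hh (u⁻¹ * u⁻¹)).inv_left).eq]
    have hs : ⁅u⁻¹, x⁆ ∈ H := commutator_mem_commutator (inv_mem hu) (mem_top x)
    have hhx : ⁅h⁻¹, x⁆ = 1 :=
      commutatorElement_eq_one_iff_commute.mpr ((hcomm h hh x).inv_left)
    have exp1 : ⁅u⁻¹ * u⁻¹ * h⁻¹, x⁆ = ⁅u⁻¹ * u⁻¹, x⁆ := by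
      have e0 : ⁅u⁻¹ * u⁻¹ * h⁻¹, x⁆ =
          (u⁻¹ * u⁻¹) * ⁅h⁻¹, x⁆ * (u⁻¹ * u⁻¹)⁻¹ * ⁅u⁻¹ * u⁻¹, x⁆ := by
        group
      rw [e0, hhx]
      group
    have exp2 : ⁅u⁻¹ * u⁻¹, x⁆ = ⁅u⁻¹, x⁆ * ⁅u⁻¹, x⁆ := by
      have e1 : ⁅u⁻¹ * u⁻¹, x⁆ = u⁻¹ * ⁅u⁻¹, x⁆ * (u⁻¹)⁻¹ * ⁅u⁻¹, x⁆ := by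
        simp only [commutatorElement_def, mul_inv_rev, inv_inv]
        simp [mul_assoc]
      have e2 : u⁻¹ * ⁅u⁻¹, x⁆ * (u⁻¹)⁻¹ = ⁅u⁻¹, x⁆ := by
        calc u⁻¹ * ⁅u⁻¹, x⁆ * (u⁻¹)⁻¹ = ⁅u⁻¹, x⁆ * u⁻¹ * (u⁻¹)⁻¹ := by
              rw [← (hcomm _ hs u⁻¹).eq]
          _ = ⁅u⁻¹, x⁆ := by group
      rw [e1, e2]
    rw [hcinv, exp1, exp2, ← pow_two, hpow _ hs]
  rw [mem_bot, key, hcsq, hw1]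
  simp

/-- If `N` is powerfully embedded then so is `N^p`. -/
lemma PE.pow_pe [Finite G] {p : ℕ} (hp : p.Prime) (hpG : IsPGroup p G) {q : ℕ}
    (hq : (q = p ∧ Odd p) ∨ (p = 2 ∧ q = 4)) {N : Subgroup G} (hN : PE q N) :
    PE q (sgPow N p) := by
  haveI hNn : N.Normal := hN.normal
  haveI hNp : (sgPow N p).Normal := sgPow_normal N hNn p
  set H : Subgroup G := ⁅sgPow N p, (⊤ : Subgroup G)⁆ with hHdef
  set K : Subgroup G := sgPow (sgPow N p) q with hKdef
  haveI hHn : H.Normal := by rw [hHdef]; infer_instance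
  haveI hKn : K.Normal := sgPow_normal _ hNp q
  show H ≤ K
  apply descent hp hpG hHn hKn
  haveI : (sgPow H p).Normal := sgPow_normal H hHn p
  set T : Subgroup G := K ⊔ sgPow H p ⊔ ⁅H, (⊤ : Subgroup G)⁆ with hT
  haveI hTn : T.Normal := by rw [hT]; infer_instance
  apply le_of_mapq_eq_bot (T := T)
  set π := QuotientGroup.mk' T with hπ
  have hsurj := QuotientGroup.mk'_surjective T
  have hmapH : H.map π = ⁅sgPow (N.map π) p, (⊤ : Subgroup (G ⧸ T))⁆ := by
    rw [hHdef, map_commutator, map_sgPow, map_top_of_surjective _ hsurj]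
  have hcommQ : ∀ h ∈ ⁅sgPow (N.map π) p, (⊤ : Subgroup (G ⧸ T))⁆, ∀ y, Commute h y := by
    intro h hh y
    apply mapq_commute ((commutator_mono (le_refl H) le_rfl).trans le_sup_right) h _ y
    rw [hmapH] at *
    exact hh
  have hpowQ : ∀ h ∈ ⁅sgPow (N.map π) p, (⊤ : Subgroup (G ⧸ T))⁆, h ^ p = 1 := by
    intro h hh
    apply mapq_pow_eq_one ((le_sup_right : sgPow H p ≤ K ⊔ sgPow H p).trans le_sup_left) h
    rw [hmapH]
    exact hh
  have hKQ : sgPow (sgPow (N.map π) p) q = ⊥ := by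
    rw [← map_sgPow, ← map_sgPow]
    exact mapq_eq_bot (le_sup_left.trans le_sup_left)
  have hNQ : PE q (N.map π) := hN.map π hsurj
  rw [hmapH]
  rcases hq with ⟨rfl, hodd⟩ | ⟨rfl, rfl⟩
  · exact core_P2_odd hodd (N.map π) hNQ hKQ hcommQ hpowQ
  · exact core_P2_two (N.map π) hNQ hKQ hcommQ hpowQ

end PfAux

namespace PfAux

open Subgroup

variable {G : Type*} [Group G]

lemma core_P4_le {Q : Type*} [Group Q] {p : ℕ} (M N : Subgroup Q)
    (hcent : ∀ c ∈ ⁅M, N⁆, ∀ y, Commute c y)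
    (hK : sgPow ⁅M, N⁆ p = ⊥) :
    ⁅sgPow M p, N⁆ = ⊥ := by
  apply le_bot_iff.mp
  apply commutator_le_of_closure (inferInstance : (⊥ : Subgroup Q).Normal)
  rintro s ⟨x, hx, rfl⟩ b hb
  have hc : ⁅x, b⁆ ∈ ⁅M, N⁆ := commutator_mem_commutator hx hb
  have h1 : ∀ z y : Q, Commute ⁅⁅x, b⁆⁻¹, z⁆ y := by
    intro z y
    rw [commutatorElement_eq_one_iff_commute.mpr ((hcent _ hc z).inv_left)]
    exact Commute.one_left y
  have key := comm_pow x b h1 p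
  have hw : ⁅⁅x, b⁆⁻¹, x⁆ = 1 :=
    commutatorElement_eq_one_iff_commute.mpr ((hcent _ hc x).inv_left)
  have hcp : ⁅x, b⁆ ^ p = 1 := by
    have := mem_sgPow_of_mem hc p
    rw [hK] at this
    simpa using this
  rw [mem_bot, key, hw, one_pow, mul_one, hcp]

lemma core_P4_ge {Q : Type*} [Group Q] {p q : ℕ} (hq : (q = p ∧ Odd p) ∨ (p = 2 ∧ q = 4))
    (M N : Subgroup Q)
    (hP1 : ⁅⁅M, N⁆, (⊤ : Subgroup Q)⁆ ≤ sgPow ⁅M, N⁆ q)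
    (hKbot : ⁅sgPow M p, N⁆ = ⊥)
    (hcomm : ∀ h ∈ sgPow ⁅M, N⁆ p, ∀ y, Commute h y)
    (hpow : ∀ h ∈ sgPow ⁅M, N⁆ p, h ^ p = 1) :
    sgPow ⁅M, N⁆ p = ⊥ := by
  -- anything in ⁅⁅M,N⁆,⊤⁆ has trivial `q.choose 2` power, and for p = 2 is trivial itself
  have hkill : ∀ w ∈ ⁅⁅M, N⁆, (⊤ : Subgroup Q)⁆, w ^ p.choose 2 = 1 ∧ ∀ y, Commute w y := by
    intro w hw
    rcases hq with ⟨hqp, hodd⟩ | ⟨rfl, rfl⟩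
    · have hwp : w ∈ sgPow ⁅M, N⁆ p := by rw [← hqp]; exact hP1 hw
      obtain ⟨m, hm⟩ := dvd_choose_two (Or.inl ⟨hqp, hodd⟩)
      rw [hqp] at hm
      exact ⟨by rw [hm, pow_mul, hpow _ hwp, one_pow], fun y => hcomm _ hwp y⟩
    · have h42 : sgPow ⁅M, N⁆ 4 ≤ sgPow (sgPow ⁅M, N⁆ 2) 2 := by
        have h4 : (4 : ℕ) = 2 * 2 := by norm_num
        rw [h4]
        exact sgPow_mul_le' ⁅M, N⁆ 2 2
      have hbot2 : sgPow (sgPow ⁅M, N⁆ 2) 2 = ⊥ := sgPow_eq_bot_of_pow hpow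
      have hw1 : w = 1 := by
        have := h42 (hP1 hw)
        rw [hbot2] at this
        simpa using this
      refine ⟨by rw [hw1, one_pow], fun y => by rw [hw1]; exact Commute.one_left y⟩
  have claim : ∀ c ∈ ⁅M, N⁆, c ^ p = 1 := by
    intro c hc
    rw [Subgroup.commutator_def] at hc
    induction hc using closure_induction with
    | mem z hz =>
      obtain ⟨m', hm', n', hn', rfl⟩ := hz
      have h0 : ⁅m' ^ p, n'⁆ = 1 := by
        have : ⁅m' ^ p, n'⁆ ∈ ⁅sgPow M p, N⁆ :=
          commutator_mem_commutator (mem_sgPow_of_mem hm' p) hn'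
        rw [hKbot] at this
        simpa using this
      have hcMN : ⁅m', n'⁆ ∈ ⁅M, N⁆ := commutator_mem_commutator hm' hn'
      have h1 : ∀ z y : Q, Commute ⁅⁅m', n'⁆⁻¹, z⁆ y := fun z y =>
        (hkill _ (commutator_mem_commutator (inv_mem hcMN) (mem_top z))).2 y
      have key := comm_pow m' n' h1 p
      have hwk := (hkill _ (commutator_mem_commutator (inv_mem hcMN) (mem_top m'))).1
      rw [h0, hwk, mul_one] at key
      exact key.symm
    | one => exact one_pow p
    | mul c d hc hd ihc ihd =>
      rw [← Subgroup.commutator_def] at hc hd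
      have he : ⁅d, c⁆ ∈ ⁅⁅M, N⁆, (⊤ : Subgroup Q)⁆ :=
        commutator_mem_commutator hd (mem_top c)
      have key := mul_pow_comm2 c d (fun y => (hkill _ he).2 y) p
      rw [key, ihc, ihd, (hkill _ he).1]
      simp
    | inv c hc ihc => rw [inv_pow, ihc, inv_one]
  exact sgPow_eq_bot_of_pow claim

/-- `[M^p, N] = [M,N]^p` for powerfully embedded `M`, `N`. -/
lemma lemma_P4 [Finite G] {p : ℕ} (hp : p.Prime) (hpG : IsPGroup p G) {q : ℕ}
    (hq : (q = p ∧ Odd p) ∨ (p = 2 ∧ q = 4)) {M N : Subgroup G} (hM : PE q M) (hN : PE q N) :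
    ⁅sgPow M p, N⁆ = sgPow ⁅M, N⁆ p := by
  haveI hMn : M.Normal := hM.normal
  haveI hNn : N.Normal := hN.normal
  haveI : (sgPow M p).Normal := sgPow_normal M hMn p
  have hle : ⁅sgPow M p, N⁆ ≤ sgPow ⁅M, N⁆ p := by
    set K : Subgroup G := sgPow ⁅M, N⁆ p with hKdef
    haveI hKn : K.Normal := sgPow_normal _ inferInstance p
    apply le_of_mapq_eq_bot (T := K)
    set π := QuotientGroup.mk' K with hπ
    have hsurj := QuotientGroup.mk'_surjective K
    haveI : Finite (G ⧸ K) := Quotient.finite _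
    have hpQ : IsPGroup p (G ⧸ K) := hpG.to_quotient K
    have hMq : PE q (M.map π) := hM.map π hsurj
    have hNq : PE q (N.map π) := hN.map π hsurj
    have hbotQ : sgPow ⁅M.map π, N.map π⁆ p = ⊥ := by
      rw [← map_commutator, ← map_sgPow]
      exact mapq_eq_bot le_rfl
    have hP1Q : ⁅⁅M.map π, N.map π⁆, (⊤ : Subgroup (G ⧸ K))⁆ ≤ sgPow ⁅M.map π, N.map π⁆ q :=
      PE.commutator_pe hp hpQ hq hMq hNq
    have hq_le_pQ : ∀ X : Subgroup (G ⧸ K), sgPow X q ≤ sgPow X p := by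
      intro X
      rcases hq with ⟨hqp, -⟩ | ⟨rfl, rfl⟩
      · rw [hqp]
      · have h4 : (4 : ℕ) = 2 * 2 := by norm_num
        rw [h4]
        exact sgPow_mul_le X 2 2
    have hcent : ∀ c ∈ ⁅M.map π, N.map π⁆, ∀ y, Commute c y := by
      intro c hc y
      rw [← commutatorElement_eq_one_iff_commute]
      have h1 : ⁅c, y⁆ ∈ sgPow ⁅M.map π, N.map π⁆ q :=
        hP1Q (commutator_mem_commutator hc (mem_top y))
      have h3 : ⁅c, y⁆ ∈ sgPow ⁅M.map π, N.map π⁆ p := hq_le_pQ _ h1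
      rw [hbotQ] at h3
      simpa using h3
    have hres := core_P4_le (M.map π) (N.map π) hcent hbotQ
    rw [map_commutator, map_sgPow]
    exact hres
  have hge : sgPow ⁅M, N⁆ p ≤ ⁅sgPow M p, N⁆ := by
    set H : Subgroup G := sgPow ⁅M, N⁆ p with hHdef
    set K : Subgroup G := ⁅sgPow M p, N⁆ with hKdef
    haveI hHn : H.Normal := sgPow_normal _ inferInstance p
    haveI hKn : K.Normal := by rw [hKdef]; infer_instance
    apply descent hp hpG hHn hKn
    haveI : (sgPow H p).Normal := sgPow_normal H hHn p
    set T : Subgroup G := K ⊔ sgPow H p ⊔ ⁅H, (⊤ : Subgroup G)⁆ with hT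
    haveI hTn : T.Normal := by rw [hT]; infer_instance
    apply le_of_mapq_eq_bot (T := T)
    set π := QuotientGroup.mk' T with hπ
    have hsurj := QuotientGroup.mk'_surjective T
    haveI : Finite (G ⧸ T) := Quotient.finite _
    have hpQ : IsPGroup p (G ⧸ T) := hpG.to_quotient T
    have hMq : PE q (M.map π) := hM.map π hsurj
    have hNq : PE q (N.map π) := hN.map π hsurj
    have hmapH : H.map π = sgPow ⁅M.map π, N.map π⁆ p := by
      rw [hHdef, map_sgPow, map_commutator]
    have hP1Q : ⁅⁅M.map π, N.map π⁆, (⊤ : Subgroup (G ⧸ T))⁆ ≤ sgPow ⁅M.map π, N.map π⁆ q :=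
      PE.commutator_pe hp hpQ hq hMq hNq
    have hKbotQ : ⁅sgPow (M.map π) p, N.map π⁆ = ⊥ := by
      rw [← map_sgPow, ← map_commutator]
      exact mapq_eq_bot (le_sup_left.trans le_sup_left)
    have hcommQ : ∀ h ∈ sgPow ⁅M.map π, N.map π⁆ p, ∀ y, Commute h y := by
      intro h hh y
      apply mapq_commute (le_sup_right : ⁅H, (⊤ : Subgroup G)⁆ ≤ T) h _ y
      rw [hmapH]
      exact hh
    have hpowQ : ∀ h ∈ sgPow ⁅M.map π, N.map π⁆ p, h ^ p = 1 := by
      intro h hh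
      apply mapq_pow_eq_one ((le_sup_right : sgPow H p ≤ K ⊔ sgPow H p).trans le_sup_left) h
      rw [hmapH]
      exact hh
    have hres := core_P4_ge hq (M.map π) (N.map π) hP1Q hKbotQ hcommQ hpowQ
    rw [hmapH]
    exact hres
  exact le_antisymm hle hge

end PfAux

namespace PfAux

open Subgroup

variable {G : Type*} [Group G]

lemma peelCore {Q : Type*} [Group Q] {p q : ℕ} (hq : (q = p ∧ Odd p) ∨ (p = 2 ∧ q = 4))
    (V W : Subgroup Q) (n : ℕ) (hpeV : PE q V) (hV : V = sgPow W n)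
    (hKbot : sgPow W (n * p) = ⊥)
    (hcomm : ∀ h ∈ sgPow V p, ∀ y, Commute h y)
    (hpow : ∀ h ∈ sgPow V p, h ^ p = 1) :
    sgPow V p = ⊥ := by
  have hkill : ∀ w ∈ ⁅V, (⊤ : Subgroup Q)⁆, w ^ p.choose 2 = 1 ∧ ∀ y, Commute w y := by
    intro w hw
    rcases hq with ⟨hqp, hodd⟩ | ⟨rfl, rfl⟩
    · have hwp : w ∈ sgPow V p := by rw [← hqp]; exact hpeV hw
      obtain ⟨m, hm⟩ := dvd_choose_two (Or.inl ⟨hqp, hodd⟩)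
      rw [hqp] at hm
      exact ⟨by rw [hm, pow_mul, hpow _ hwp, one_pow], fun y => hcomm _ hwp y⟩
    · have h42 : sgPow V 4 ≤ sgPow (sgPow V 2) 2 := by
        have h4 : (4 : ℕ) = 2 * 2 := by norm_num
        rw [h4]
        exact sgPow_mul_le' V 2 2
      have hbot2 : sgPow (sgPow V 2) 2 = ⊥ := sgPow_eq_bot_of_pow hpow
      have hw1 : w = 1 := by
        have := h42 (hpeV hw)
        rw [hbot2] at this
        simpa using this
      exact ⟨by rw [hw1, one_pow], fun y => by rw [hw1]; exact Commute.one_left y⟩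
  have claim : ∀ a ∈ V, a ^ p = 1 := by
    intro a ha
    rw [hV] at ha
    induction ha using closure_induction with
    | mem z hz =>
      obtain ⟨x, hx, rfl⟩ := hz
      have : (x ^ n) ^ p = x ^ (n * p) := by rw [← pow_mul]
      rw [this]
      have hmem := mem_sgPow_of_mem hx (n * p)
      rw [hKbot] at hmem
      simpa using hmem
    | one => exact one_pow p
    | mul a b ha hb iha ihb =>
      have haV : a ∈ V := by rw [hV]; exact ha
      have hbV : b ∈ V := by rw [hV]; exact hb
      have he : ⁅b, a⁆ ∈ ⁅V, (⊤ : Subgroup Q)⁆ := commutator_mem_commutator hbV (mem_top a)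
      have key := mul_pow_comm2 a b (fun y => (hkill _ he).2 y) p
      rw [key, iha, ihb, (hkill _ he).1]
      simp
    | inv a ha iha => rw [inv_pow, iha, inv_one]
  exact sgPow_eq_bot_of_pow claim

lemma peel [Finite G] {p : ℕ} (hp : p.Prime) (hpG : IsPGroup p G) {q : ℕ}
    (hq : (q = p ∧ Odd p) ∨ (p = 2 ∧ q = 4)) (V W : Subgroup G) (n : ℕ)
    (hpeV : PE q V) (hV : V = sgPow W n) (hWn : W.Normal) :
    sgPow V p = sgPow W (n * p) := by
  haveI hVn : V.Normal := hpeV.normal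
  haveI hHn : (sgPow V p).Normal := sgPow_normal V hVn p
  haveI hKn : (sgPow W (n * p)).Normal := sgPow_normal W hWn (n * p)
  have hge : sgPow W (n * p) ≤ sgPow V p := by
    apply closure_le _ |>.mpr
    rintro s ⟨x, hx, rfl⟩
    have h1 : x ^ n ∈ V := by rw [hV]; exact mem_sgPow_of_mem hx n
    have h2 : x ^ (n * p) = (x ^ n) ^ p := by rw [← pow_mul]
    rw [h2]
    exact mem_sgPow_of_mem h1 p
  have hle : sgPow V p ≤ sgPow W (n * p) := by
    set H : Subgroup G := sgPow V p with hHdef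
    set K : Subgroup G := sgPow W (n * p) with hKdef
    apply descent hp hpG hHn hKn
    haveI : (sgPow H p).Normal := sgPow_normal H hHn p
    set T : Subgroup G := K ⊔ sgPow H p ⊔ ⁅H, (⊤ : Subgroup G)⁆ with hT
    haveI hTn : T.Normal := by rw [hT]; infer_instance
    apply le_of_mapq_eq_bot (T := T)
    set π := QuotientGroup.mk' T with hπ
    have hsurj := QuotientGroup.mk'_surjective T
    have hmapH : H.map π = sgPow (V.map π) p := by rw [hHdef, map_sgPow]
    have hpeVQ : PE q (V.map π) := hpeV.map π hsurj
    have hVQ : V.map π = sgPow (W.map π) n := by rw [hV, map_sgPow]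
    have hKbotQ : sgPow (W.map π) (n * p) = ⊥ := by
      rw [← map_sgPow]
      exact mapq_eq_bot (le_sup_left.trans le_sup_left)
    have hcommQ : ∀ h ∈ sgPow (V.map π) p, ∀ y, Commute h y := by
      intro h hh y
      apply mapq_commute (le_sup_right : ⁅H, (⊤ : Subgroup G)⁆ ≤ T) h _ y
      rw [hmapH]
      exact hh
    have hpowQ : ∀ h ∈ sgPow (V.map π) p, h ^ p = 1 := by
      intro h hh
      apply mapq_pow_eq_one ((le_sup_right : sgPow H p ≤ K ⊔ sgPow H p).trans le_sup_left) h
      rw [hmapH]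
      exact hh
    have hres := peelCore hq (V.map π) (W.map π) n hpeVQ hVQ hKbotQ hcommQ hpowQ
    rw [hmapH]
    exact hres
  exact le_antisymm hle hge

lemma peChain [Finite G] {p : ℕ} (hp : p.Prime) (hpG : IsPGroup p G) {q : ℕ}
    (hq : (q = p ∧ Odd p) ∨ (p = 2 ∧ q = 4)) {M : Subgroup G} (hM : PE q M) :
    ∀ i : ℕ, PE q (sgPow M (p ^ i)) ∧ sgPow (sgPow M (p ^ i)) p = sgPow M (p ^ (i + 1)) := by
  intro i
  induction i with
  | zero =>
    have e : sgPow M (p ^ 0) = M := by rw [pow_zero, sgPow_one]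
    constructor
    · rw [e]; exact hM
    · rw [e, pow_one]
  | succ i ih =>
    obtain ⟨ihpe, iheq⟩ := ih
    have hpe1 : PE q (sgPow M (p ^ (i + 1))) := by
      rw [← iheq]
      exact ihpe.pow_pe hp hpG hq
    refine ⟨hpe1, ?_⟩
    have := peel hp hpG hq (sgPow M (p ^ (i + 1))) M (p ^ (i + 1)) hpe1 rfl hM.normal
    rw [this, ← pow_succ]

lemma collapse [Finite G] {p : ℕ} (hp : p.Prime) (hpG : IsPGroup p G) {q : ℕ}
    (hq : (q = p ∧ Odd p) ∨ (p = 2 ∧ q = 4)) {M : Subgroup G} (hM : PE q M) (i j : ℕ) :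
    sgPow (sgPow M (p ^ i)) (p ^ j) = sgPow M (p ^ (i + j)) := by
  induction j with
  | zero => rw [pow_zero, sgPow_one, add_zero]
  | succ j ih =>
    have hY : PE q (sgPow M (p ^ i)) := (peChain hp hpG hq hM i).1
    have h1 := (peChain hp hpG hq hY j).2
    rw [← h1, ih, (peChain hp hpG hq hM (i + j)).2, ← add_assoc]

lemma powComm [Finite G] {p : ℕ} (hp : p.Prime) (hpG : IsPGroup p G) {q : ℕ}
    (hq : (q = p ∧ Odd p) ∨ (p = 2 ∧ q = 4)) {M N : Subgroup G} (hM : PE q M) (hN : PE q N)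
    (i : ℕ) : ⁅sgPow M (p ^ i), N⁆ = sgPow ⁅M, N⁆ (p ^ i) := by
  induction i with
  | zero => rw [pow_zero, sgPow_one, sgPow_one]
  | succ i ih =>
    have h1 := (peChain hp hpG hq hM i).2
    have h2 := lemma_P4 hp hpG hq (peChain hp hpG hq hM i).1 hN
    have h3 := (peChain hp hpG hq (PE.commutator_pe hp hpG hq hM hN) i).2
    rw [← h1, h2, ih, h3]

end PfAux

/-- Shalev: if M, N are powerfully embedded subgroups of a finite p-group G,
then [M^{p^i}, N^{p^j}] = [M,N]^{p^{i+j}} for all i, j. -/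
theorem stmt6 {G : Type*} [Group G] [Finite G] (p : ℕ) (hp : p.Prime)
    (hpG : IsPGroup p G)
    (M N : Subgroup G) (hM : PowerfullyEmbedded p M) (hN : PowerfullyEmbedded p N)
    (i j : ℕ) :
    ⁅sgPow M (p ^ i), sgPow N (p ^ j)⁆ = sgPow ⁅M, N⁆ (p ^ (i + j)) := by

  open PfAux in
  set q : ℕ := if p = 2 then 4 else p with hqdef
  have hq : (q = p ∧ Odd p) ∨ (p = 2 ∧ q = 4) := by
    by_cases h2 : p = 2
    · right; exact ⟨h2, by rw [hqdef, if_pos h2]⟩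
    · left; exact ⟨by rw [hqdef, if_neg h2], hp.odd_of_ne_two h2⟩
  have hM' : PfAux.PE q M := hM
  have hN' : PfAux.PE q N := hN
  have hMi : PfAux.PE q (sgPow M (p ^ i)) := (PfAux.peChain hp hpG hq hM' i).1
  calc ⁅sgPow M (p ^ i), sgPow N (p ^ j)⁆
      = ⁅sgPow N (p ^ j), sgPow M (p ^ i)⁆ := Subgroup.commutator_comm _ _
    _ = sgPow ⁅N, sgPow M (p ^ i)⁆ (p ^ j) := PfAux.powComm hp hpG hq hN' hMi j
    _ = sgPow ⁅sgPow M (p ^ i), N⁆ (p ^ j) := by rw [Subgroup.commutator_comm]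
    _ = sgPow (sgPow ⁅M, N⁆ (p ^ i)) (p ^ j) := by
        rw [PfAux.powComm hp hpG hq hM' hN' i]
    _ = sgPow ⁅M, N⁆ (p ^ (i + j)) :=
        PfAux.collapse hp hpG hq (PfAux.PE.commutator_pe hp hpG hq hM' hN') i j
end

section
/- Let G be a finite p-group. Then G is powerfully nilpotent if and only if the quotient G/G^{p^2} is powerfully nilpotent. -/
/-- `N` is powerfully nilpotent (w.r.t. the prime `p`): there is an ascending chain of
subgroups `⊥ = H 0 ≤ H 1 ≤ ⋯ ≤ H n = N` with `[H (i+1), N] ≤ (H i)^p`. -/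
def PowerfullyNilpotentOn {G : Type*} [Group G] (p : ℕ) (N : Subgroup G) : Prop :=
  ∃ (n : ℕ) (H : ℕ → Subgroup G), H 0 = ⊥ ∧ H n = N ∧ (∀ i, H i ≤ H (i + 1)) ∧
    (∀ i, H i ≤ N) ∧ ∀ i < n, ⁅H (i + 1), N⁆ ≤ sgPow (H i) p

/-- A group `G` is powerfully nilpotent for the prime `p`: it is powerful
(`[G,G] ≤ G^p` for odd p, `[G,G] ≤ G^4` for p = 2) and has a powerfully central
ascending chain from `⊥` to `⊤`. -/
def PowerfullyNilpotent (p : ℕ) (G : Type*) [Group G] : Prop :=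
  ⁅(⊤ : Subgroup G), (⊤ : Subgroup G)⁆ ≤ sgPow ⊤ (if p = 2 then 4 else p) ∧
    PowerfullyNilpotentOn p (⊤ : Subgroup G)

instance sgPow_top_normal {G : Type*} [Group G] (n : ℕ) :
    (sgPow (⊤ : Subgroup G) n).Normal := by
  constructor
  intro x hx g
  have key : ∀ y ∈ ({x | ∃ h ∈ (⊤ : Subgroup G), h ^ n = x} : Set G),
      g * y * g⁻¹ ∈ sgPow (⊤ : Subgroup G) n := by
    rintro y ⟨h, -, rfl⟩
    have : g * h ^ n * g⁻¹ = (g * h * g⁻¹) ^ n := by simp [conj_pow]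
    rw [this]
    exact Subgroup.subset_closure ⟨g * h * g⁻¹, trivial, rfl⟩
  induction hx using Subgroup.closure_induction with
  | mem y hy => exact key y hy
  | one => simpa using (sgPow (⊤ : Subgroup G) n).one_mem
  | mul y z hy hz ihy ihz =>
      have : g * (y * z) * g⁻¹ = (g * y * g⁻¹) * (g * z * g⁻¹) := by group
      rw [this]; exact Subgroup.mul_mem _ ihy ihz
  | inv y hy ihy =>
      have : g * y⁻¹ * g⁻¹ = (g * y * g⁻¹)⁻¹ := by group
      rw [this]; exact Subgroup.inv_mem _ ihy

section PNAux

open Subgroup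

open scoped commutatorElement

variable {G : Type*} [Group G]

theorem mem_sgPow {H : Subgroup G} {h : G} (hh : h ∈ H) (n : ℕ) : h ^ n ∈ sgPow H n :=
  Subgroup.subset_closure ⟨h, hh, rfl⟩

theorem sgPow_le {H : Subgroup G} {n : ℕ} {K : Subgroup G} (hK : ∀ h ∈ H, h ^ n ∈ K) :
    sgPow H n ≤ K := by
  rw [sgPow, Subgroup.closure_le]
  rintro x ⟨h, hh, rfl⟩
  exact hK h hh

theorem sgPow_mono {H K : Subgroup G} (h : H ≤ K) (n : ℕ) : sgPow H n ≤ sgPow K n :=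
  sgPow_le fun x hx => mem_sgPow (h hx) n

theorem sgPow_le_self (H : Subgroup G) (n : ℕ) : sgPow H n ≤ H :=
  sgPow_le fun x hx => pow_mem hx n

theorem map_sgPow {G' : Type*} [Group G'] (f : G →* G') (H : Subgroup G) (n : ℕ) :
    Subgroup.map f (sgPow H n) = sgPow (Subgroup.map f H) n := by
  rw [sgPow, sgPow, MonoidHom.map_closure]
  congr 1
  ext x
  constructor
  · rintro ⟨y, ⟨h, hh, rfl⟩, rfl⟩
    exact ⟨f h, Subgroup.mem_map_of_mem f hh, (map_pow f h n).symm⟩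
  · rintro ⟨y, ⟨h, hh, rfl⟩, rfl⟩
    exact ⟨h ^ n, ⟨h, hh, rfl⟩, map_pow f h n⟩

theorem normal_of_le_center {A : Subgroup G} (hA : A ≤ Subgroup.center G) : A.Normal := by
  constructor
  intro a ha g
  have h1 : g * a = a * g := Subgroup.mem_center_iff.1 (hA ha) g
  have h2 : g * a * g⁻¹ = a := by rw [h1, mul_assoc, mul_inv_cancel, mul_one]
  rwa [h2]

theorem commutator_le_of_le_center {A B C : Subgroup G} (hA : A ≤ Subgroup.center G) :
    ⁅A, B⁆ ≤ C := by
  rw [Subgroup.commutator_le]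
  intro a ha b _
  have h1 : ⁅a, b⁆ = 1 := commutatorElement_eq_one_iff_mul_comm.2
    (Subgroup.mem_center_iff.1 (hA ha) b).symm
  rw [h1]; exact C.one_mem

theorem commutator_sup_central_le {A K C : Subgroup G} (hA : A ≤ Subgroup.center G)
    (hK : ⁅K, (⊤ : Subgroup G)⁆ ≤ C) : ⁅A ⊔ K, (⊤ : Subgroup G)⁆ ≤ C := by
  haveI : A.Normal := normal_of_le_center hA
  rw [Subgroup.commutator_le]
  intro x hx g _
  have hx' : x ∈ (↑(A ⊔ K) : Set G) := hx
  rw [Subgroup.normal_mul] at hx'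
  obtain ⟨a, ha, k, hk, rfl⟩ := hx'
  have ha' : ∀ y : G, y * a = a * y := Subgroup.mem_center_iff.1 (hA ha)
  have key : ⁅a * k, g⁆ = ⁅k, g⁆ := by
    have h1 : a * (k * g * k⁻¹) = (k * g * k⁻¹) * a := (ha' _).symm
    calc ⁅a * k, g⁆ = a * (k * g * k⁻¹) * a⁻¹ * g⁻¹ := by
          rw [commutatorElement_def]; group
      _ = (k * g * k⁻¹) * a * a⁻¹ * g⁻¹ := by rw [h1]
      _ = ⁅k, g⁆ := by rw [commutatorElement_def]; group
  rw [key]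
  exact (Subgroup.commutator_le.1 hK) k hk g (Subgroup.mem_top g)

theorem commutator_pow_of_central {x g : G} (hc : ⁅x, g⁆ ∈ Subgroup.center G) (n : ℕ) :
    ⁅x ^ n, g⁆ = ⁅x, g⁆ ^ n := by
  have hxg : x * g * x⁻¹ = ⁅x, g⁆ * g := by rw [commutatorElement_def]; group
  have key : ∀ m : ℕ, x ^ m * g * (x ^ m)⁻¹ = ⁅x, g⁆ ^ m * g := by
    intro m
    induction m with
    | zero => simp
    | succ m ih =>
      have hcomm : x * ⁅x, g⁆ ^ m = ⁅x, g⁆ ^ m * x :=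
        Subgroup.mem_center_iff.1 (pow_mem hc m) x
      calc x ^ (m + 1) * g * (x ^ (m + 1))⁻¹
          = x * (x ^ m * g * (x ^ m)⁻¹) * x⁻¹ := by rw [pow_succ']; group
        _ = x * (⁅x, g⁆ ^ m * g) * x⁻¹ := by rw [ih]
        _ = (x * ⁅x, g⁆ ^ m) * (g * x⁻¹) := by group
        _ = ⁅x, g⁆ ^ m * (x * g * x⁻¹) := by rw [hcomm]; group
        _ = ⁅x, g⁆ ^ m * (⁅x, g⁆ * g) := by rw [hxg]
        _ = ⁅x, g⁆ ^ (m + 1) * g := by rw [pow_succ]; group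
  calc ⁅x ^ n, g⁆ = (x ^ n * g * (x ^ n)⁻¹) * g⁻¹ := by rw [commutatorElement_def]
    _ = (⁅x, g⁆ ^ n * g) * g⁻¹ := by rw [key n]
    _ = ⁅x, g⁆ ^ n := by group

theorem pn_of_surjective {G' : Type*} [Group G'] {f : G →* G'}
    (hf : Function.Surjective f) (p : ℕ) (h : PowerfullyNilpotent p G) :
    PowerfullyNilpotent p G' := by
  obtain ⟨hpow, n, C, hC0, hCn, hmono, -, hcomm⟩ := h
  have htop : Subgroup.map f ⊤ = ⊤ := Subgroup.map_top_of_surjective f hf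
  refine ⟨?_, n, fun i => Subgroup.map f (C i),
    by show Subgroup.map f (C 0) = ⊥; rw [hC0]; exact Subgroup.map_bot f,
    by show Subgroup.map f (C n) = ⊤; rw [hCn]; exact htop,
    fun i => Subgroup.map_mono (hmono i), fun i => le_top, fun i hi => ?_⟩
  · calc ⁅(⊤ : Subgroup G'), ⊤⁆ = Subgroup.map f ⁅⊤, ⊤⁆ := by
          rw [Subgroup.map_commutator, htop]
      _ ≤ Subgroup.map f (sgPow ⊤ (if p = 2 then 4 else p)) := Subgroup.map_mono hpow
      _ = sgPow ⊤ (if p = 2 then 4 else p) := by rw [map_sgPow, htop]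
  · calc ⁅Subgroup.map f (C (i + 1)), (⊤ : Subgroup G')⁆
        = Subgroup.map f ⁅C (i + 1), ⊤⁆ := by rw [Subgroup.map_commutator, htop]
      _ ≤ Subgroup.map f (sgPow (C i) p) := Subgroup.map_mono (hcomm i hi)
      _ = sgPow (Subgroup.map f (C i)) p := map_sgPow f (C i) p

theorem pn_of_subsingleton [Subsingleton G] (p : ℕ) : PowerfullyNilpotent p G := by
  have hbt : (⊥ : Subgroup G) = ⊤ := by
    ext x
    simp [Subsingleton.elim x 1]
  refine ⟨?_, 0, fun _ => ⊥, rfl, hbt, fun i => le_rfl, fun i => le_top,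
    fun i hi => absurd hi (Nat.not_lt_zero i)⟩
  intro x _
  have hx : x = 1 := Subsingleton.elim x 1
  rw [hx]
  exact Subgroup.one_mem _

variable (M : Subgroup G) [M.Normal]

theorem comap_sgPow_comap (K : Subgroup (G ⧸ M)) (n : ℕ) :
    Subgroup.comap (QuotientGroup.mk' M) (sgPow K n) =
      sgPow (Subgroup.comap (QuotientGroup.mk' M) K) n ⊔ M := by
  have hs : Function.Surjective (QuotientGroup.mk' M) := QuotientGroup.mk'_surjective M
  have h1 : Subgroup.map (QuotientGroup.mk' M) (Subgroup.comap (QuotientGroup.mk' M) K) = K :=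
    Subgroup.map_comap_eq_self_of_surjective hs K
  conv_lhs => rw [← h1, ← map_sgPow]
  rw [Subgroup.comap_map_eq, QuotientGroup.ker_mk']

theorem comm_pullback {K₁ K₂ : Subgroup (G ⧸ M)} {n : ℕ}
    (h : ⁅K₂, (⊤ : Subgroup (G ⧸ M))⁆ ≤ sgPow K₁ n) :
    ⁅Subgroup.comap (QuotientGroup.mk' M) K₂, (⊤ : Subgroup G)⁆ ≤
      sgPow (Subgroup.comap (QuotientGroup.mk' M) K₁) n ⊔ M := by
  rw [← comap_sgPow_comap]
  rw [Subgroup.commutator_le]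
  intro x hx g _
  rw [Subgroup.mem_comap, map_commutatorElement]
  exact (Subgroup.commutator_le.1 h) _ (Subgroup.mem_comap.1 hx) _ (Subgroup.mem_top _)

theorem pn_quot_quot (p : ℕ)
    (h : PowerfullyNilpotent p (G ⧸ sgPow (⊤ : Subgroup G) (p ^ 2))) :
    PowerfullyNilpotent p ((G ⧸ M) ⧸ sgPow (⊤ : Subgroup (G ⧸ M)) (p ^ 2)) := by
  set φ : G →* (G ⧸ M) ⧸ sgPow (⊤ : Subgroup (G ⧸ M)) (p ^ 2) :=
    (QuotientGroup.mk' _).comp (QuotientGroup.mk' M) with hφ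
  have hφs : Function.Surjective φ :=
    (QuotientGroup.mk'_surjective _).comp (QuotientGroup.mk'_surjective M)
  have hker : sgPow (⊤ : Subgroup G) (p ^ 2) ≤ φ.ker := by
    intro x hx
    have h1 : (QuotientGroup.mk' M) x ∈ sgPow (⊤ : Subgroup (G ⧸ M)) (p ^ 2) := by
      have h2 := Subgroup.mem_map_of_mem (QuotientGroup.mk' M) hx
      rw [map_sgPow] at h2
      exact sgPow_mono le_top _ h2
    rw [← QuotientGroup.ker_mk' (sgPow (⊤ : Subgroup (G ⧸ M)) (p ^ 2))] at h1
    exact h1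
  have hψs : Function.Surjective (QuotientGroup.lift _ φ hker) := by
    intro y
    obtain ⟨x, hx⟩ := hφs y
    exact ⟨QuotientGroup.mk x, hx⟩
  exact pn_of_surjective hψs p h

end PNAux

open scoped commutatorElement

theorem pn_aux : ∀ (k : ℕ) {G : Type u} [Group G] [Finite G] (p : ℕ), p.Prime → IsPGroup p G →
    Nat.card G ≤ k → PowerfullyNilpotent p (G ⧸ sgPow (⊤ : Subgroup G) (p ^ 2)) →
    PowerfullyNilpotent p G := by
  intro k
  induction k with
  | zero =>
    intro G _ _ p _ _ hcard _
    have := Nat.card_pos (α := G)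
    omega
  | succ k IH =>
    intro G _ _ p hp hpG hcard hQ
    haveI : Fact p.Prime := ⟨hp⟩
    -- the powerful condition for G, directly
    have hNq : sgPow (⊤ : Subgroup G) (p ^ 2) ≤ sgPow (⊤ : Subgroup G) (if p = 2 then 4 else p) := by
      by_cases h2 : p = 2
      · subst h2
        have h4 : (2 : ℕ) ^ 2 = 4 := by norm_num
        rw [h4, if_pos rfl]
      · rw [if_neg h2]
        apply sgPow_le
        intro h _
        rw [pow_two, pow_mul]
        exact mem_sgPow (Subgroup.mem_top (h ^ p)) p
    have hpowG : ⁅(⊤ : Subgroup G), ⊤⁆ ≤ sgPow (⊤ : Subgroup G) (if p = 2 then 4 else p) := by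
      have h1 : ⁅Subgroup.comap (QuotientGroup.mk' (sgPow (⊤ : Subgroup G) (p ^ 2))) ⊤,
          (⊤ : Subgroup G)⁆ ≤
          sgPow (Subgroup.comap (QuotientGroup.mk' (sgPow (⊤ : Subgroup G) (p ^ 2))) ⊤)
            (if p = 2 then 4 else p) ⊔ sgPow (⊤ : Subgroup G) (p ^ 2) :=
        comm_pullback (sgPow (⊤ : Subgroup G) (p ^ 2)) hQ.1
      rw [Subgroup.comap_top] at h1
      exact h1.trans (sup_le le_rfl hNq)
    by_cases hW' : sgPow (Subgroup.center G) p = ⊥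
    · -- center of exponent p : show G^{p²} = ⊥ and transfer
      by_cases htriv : Subsingleton G
      · exact pn_of_subsingleton p
      · haveI : Nontrivial G := not_subsingleton_iff_nontrivial.1 htriv
        haveI hcnt : Nontrivial (Subgroup.center G) := hpG.center_nontrivial
        have hcard2 : 1 < Nat.card (Subgroup.center G) := Finite.one_lt_card
        have hcardQ : Nat.card (G ⧸ Subgroup.center G) ≤ k := by
          have heq : Nat.card G =
              Nat.card (G ⧸ Subgroup.center G) * Nat.card (Subgroup.center G) :=
            Subgroup.card_eq_card_quotient_mul_card_subgroup _
          have hpos : 0 < Nat.card (G ⧸ Subgroup.center G) := Nat.card_pos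
          nlinarith
        have hpnQ : PowerfullyNilpotent p (G ⧸ Subgroup.center G) :=
          IH p hp (hpG.to_quotient _) hcardQ (pn_quot_quot (Subgroup.center G) p hQ)
        obtain ⟨-, n, C, hC0, hCn, hmono, -, hcomm⟩ := hpnQ
        have key : ∀ j, j ≤ n → ∀ x ∈ Subgroup.comap (QuotientGroup.mk' (Subgroup.center G))
            (C j), x ^ p ∈ Subgroup.center G := by
          intro j
          induction j with
          | zero =>
            intro _ x hx
            rw [hC0, MonoidHom.comap_bot, QuotientGroup.ker_mk'] at hx
            exact pow_mem hx p
          | succ j ihj =>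
            intro hjn x hx
            have hj : j < n := Nat.lt_of_succ_le hjn
            have hcom := comm_pullback (Subgroup.center G) (hcomm j hj)
            have hsg : sgPow (Subgroup.comap (QuotientGroup.mk' (Subgroup.center G)) (C j)) p ≤
                Subgroup.center G := sgPow_le fun h hh => ihj (Nat.le_of_lt hj) h hh
            have hcomm' : ∀ g : G, ⁅x, g⁆ ∈ Subgroup.center G := fun g =>
              (sup_le hsg le_rfl) ((Subgroup.commutator_le.1 hcom) x hx g (Subgroup.mem_top g))
            rw [Subgroup.mem_center_iff]
            intro g
            have hc := hcomm' g
            have h1 : ⁅x ^ p, g⁆ = ⁅x, g⁆ ^ p := commutator_pow_of_central hc p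
            have h2 : ⁅x, g⁆ ^ p = 1 := by
              have h3 : ⁅x, g⁆ ^ p ∈ sgPow (Subgroup.center G) p := mem_sgPow hc p
              rwa [hW', Subgroup.mem_bot] at h3
            exact (commutatorElement_eq_one_iff_mul_comm.1 (h1.trans h2)).symm
        have hNbot : sgPow (⊤ : Subgroup G) (p ^ 2) = ⊥ := by
          rw [eq_bot_iff]
          apply sgPow_le
          intro h _
          have h1 : h ^ p ∈ Subgroup.center G := by
            apply key n le_rfl
            rw [hCn]
            exact Subgroup.mem_comap.2 (Subgroup.mem_top _)
          have h2 : (h ^ p) ^ p ∈ sgPow (Subgroup.center G) p := mem_sgPow h1 p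
          rw [hW'] at h2
          have h3 : h ^ p ^ 2 = (h ^ p) ^ p := by rw [pow_two, pow_mul]
          rw [h3]
          exact h2
        have hker : sgPow (⊤ : Subgroup G) (p ^ 2) ≤ (MonoidHom.id G).ker := by
          intro x hx
          rw [hNbot] at hx
          simpa using Subgroup.mem_bot.1 hx
        exact pn_of_surjective
          (f := QuotientGroup.lift _ (MonoidHom.id G) hker)
          (fun y => ⟨QuotientGroup.mk y, rfl⟩) p hQ
    · -- sgPow (center) p nontrivial : quotient by it
      have hW'le : sgPow (Subgroup.center G) p ≤ Subgroup.center G := sgPow_le_self _ _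
      haveI : (sgPow (Subgroup.center G) p).Normal := normal_of_le_center hW'le
      have hcard2 : 1 < Nat.card (sgPow (Subgroup.center G) p) :=
        (Subgroup.one_lt_card_iff_ne_bot _).2 hW'
      have hcardQ : Nat.card (G ⧸ sgPow (Subgroup.center G) p) ≤ k := by
        have heq : Nat.card G = Nat.card (G ⧸ sgPow (Subgroup.center G) p) *
            Nat.card (sgPow (Subgroup.center G) p) :=
          Subgroup.card_eq_card_quotient_mul_card_subgroup _
        have hpos : 0 < Nat.card (G ⧸ sgPow (Subgroup.center G) p) := Nat.card_pos
        nlinarith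
      have hpnQ : PowerfullyNilpotent p (G ⧸ sgPow (Subgroup.center G) p) :=
        IH p hp (hpG.to_quotient _) hcardQ (pn_quot_quot (sgPow (Subgroup.center G) p) p hQ)
      obtain ⟨-, n, C, hC0, hCn, hmono, -, hcomm⟩ := hpnQ
      set π := QuotientGroup.mk' (sgPow (Subgroup.center G) p) with hπ
      refine ⟨hpowG, n + 1,
        fun j => Nat.casesOn j ⊥ (fun i => Subgroup.center G ⊔ Subgroup.comap π (C i)),
        rfl, ?_, ?_, fun i => le_top, ?_⟩
      · show Subgroup.center G ⊔ Subgroup.comap π (C n) = ⊤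
        rw [hCn, Subgroup.comap_top, sup_top_eq]
      · intro i
        cases i with
        | zero => exact bot_le
        | succ i =>
          exact sup_le_sup_left (Subgroup.comap_mono (hmono i)) _
      · intro i hi
        cases i with
        | zero =>
          apply commutator_le_of_le_center
          refine sup_le le_rfl ?_
          rw [hC0, MonoidHom.comap_bot, hπ, QuotientGroup.ker_mk']
          exact hW'le
        | succ i =>
          have hi' : i < n := Nat.succ_lt_succ_iff.1 hi
          apply commutator_sup_central_le le_rfl
          have h1 := comm_pullback (sgPow (Subgroup.center G) p) (hcomm i hi')
          refine h1.trans (sup_le ?_ ?_)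
          · exact sgPow_mono le_sup_right p
          · exact (sgPow_mono (le_sup_left (b := Subgroup.comap π (C i))) p)

/-- a finite p-group G is powerfully nilpotent iff G/G^{p²} is. -/
theorem stmt7 {G : Type*} [Group G] [Finite G] (p : ℕ) (hp : p.Prime)
    (hpG : IsPGroup p G) :
    PowerfullyNilpotent p G ↔
      PowerfullyNilpotent p (G ⧸ sgPow (⊤ : Subgroup G) (p ^ 2)) := by
  constructor
  · intro h
    exact pn_of_surjective (QuotientGroup.mk'_surjective _) p h
  · intro h
    exact pn_aux (Nat.card G) p hp hpG le_rfl h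
end
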